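/- arXiv:1303.7152 — 2 statements merged into one kernel-verified Lean document; each statement's English description precedes it below -/
import Mathlib

section
/- Let G1 be a VC(b1,a1,v1) type class and G2 a VC(b2,a2,v2) type class of measurable functions on a measurable space (S, S). Set a = (a1^{v1} * a2^{v2})^{1/(v1+v2)}. Then the product class G1·G2 = {g1*g2 : g1 in G1, g2 in G2} is a VC(b1*b2, 2a, v1+v2) type class. -/
open MeasureTheory

/-- `G` can be covered by `n` balls of `L²(Q)`-radius `ε`. -/
def CoveredBy {S : Type*} [MeasurableSpace S] (G : Set (S → ℝ)) (Q : Measure S)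
    (ε : ℝ) (n : ℕ) : Prop :=
  ∃ c : Fin n → S → ℝ, ∀ g ∈ G, ∃ i, ∫ x, (g x - c i x) ^ 2 ∂Q ≤ ε ^ 2

/-- A finitely discrete measure: supported on a finite set. -/
def FinitelyDiscrete {S : Type*} [MeasurableSpace S] (Q : Measure S) : Prop :=
  ∃ s : Finset S, Q ((↑s : Set S)ᶜ) = 0

/-- `G` is a VC(b,a,v) type class: uniformly bounded by `b` and with
uniform `L²(Q)` covering numbers `N(G, L₂(Q), bτ) ≤ (a/τ)^v` over all finitely
discrete probability measures `Q`. -/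
def VCType {S : Type*} [MeasurableSpace S] (G : Set (S → ℝ)) (b a v : ℝ) : Prop :=
  (0 < b ∧ Real.exp 1 ≤ a ∧ 1 ≤ v) ∧
  (∀ g ∈ G, ∀ x, |g x| ≤ b) ∧
  ∀ Q : Measure S, IsProbabilityMeasure Q → FinitelyDiscrete Q →
    ∀ τ : ℝ, 0 < τ → τ < 1 →
      ∃ n : ℕ, (n : ℝ) ≤ (a / τ) ^ v ∧ CoveredBy G Q (b * τ) n

/-- Pointwise product bound with a clamped second center. -/
lemma prod_pointwise (b1 b2 g1 g2 c1 c2 : ℝ) (hb2 : 0 ≤ b2)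
    (h1 : |g1| ≤ b1) (h2 : |g2| ≤ b2) :
    (g1 * g2 - c1 * (max (-b2) (min b2 c2))) ^ 2
      ≤ 2 * b2 ^ 2 * (g1 - c1) ^ 2 + 2 * b1 ^ 2 * (g2 - c2) ^ 2 := by
  set c2' := max (-b2) (min b2 c2) with hc2'
  have habs1 : -b1 ≤ g1 ∧ g1 ≤ b1 := abs_le.mp h1
  have habs2 : -b2 ≤ g2 ∧ g2 ≤ b2 := abs_le.mp h2
  have hclamp : (g2 - c2') ^ 2 ≤ (g2 - c2) ^ 2 := by
    rcases le_total c2 (-b2) with h | h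
    · have : c2' = -b2 := by
        rw [hc2']; rw [max_eq_left]; exact le_trans (min_le_right _ _) h
      rw [this]; nlinarith [habs2.1]
    · rcases le_total b2 c2 with h' | h'
      · have : c2' = b2 := by
          rw [hc2', min_eq_left h', max_eq_right]; linarith
        rw [this]; nlinarith [habs2.2]
      · have : c2' = c2 := by
          rw [hc2', min_eq_right h', max_eq_right]; linarith
        rw [this]
  have hc2'b : |c2'| ≤ b2 := by
    rw [abs_le]; constructor
    · exact le_max_left _ _
    · rw [hc2']; rcases le_total (min b2 c2) (-b2) with h | h
      · rw [max_eq_left h]; linarith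
      · rw [max_eq_right h]; exact min_le_left _ _
  have key : (g1 * g2 - c1 * c2') ^ 2 ≤ 2 * (g1 * (g2 - c2')) ^ 2 + 2 * (c2' * (g1 - c1)) ^ 2 := by
    have : g1 * g2 - c1 * c2' = g1 * (g2 - c2') + c2' * (g1 - c1) := by ring
    rw [this]; nlinarith [sq_nonneg (g1 * (g2 - c2') - c2' * (g1 - c1))]
  have e1 : (g1 * (g2 - c2')) ^ 2 ≤ b1 ^ 2 * (g2 - c2) ^ 2 := by
    have : (g1 * (g2 - c2')) ^ 2 = g1 ^ 2 * (g2 - c2') ^ 2 := by ring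
    rw [this]
    have hg1 : g1 ^ 2 ≤ b1 ^ 2 := by nlinarith [habs1.1, habs1.2]
    nlinarith [sq_nonneg (g2 - c2'), sq_nonneg (g2 - c2)]
  have e2 : (c2' * (g1 - c1)) ^ 2 ≤ b2 ^ 2 * (g1 - c1) ^ 2 := by
    have : (c2' * (g1 - c1)) ^ 2 = c2' ^ 2 * (g1 - c1) ^ 2 := by ring
    rw [this]
    have h := abs_le.mp hc2'b
    nlinarith [sq_nonneg (g1 - c1), mul_le_mul_of_nonneg_right
      (show c2' ^ 2 ≤ b2 ^ 2 by nlinarith [h.1, h.2]) (sq_nonneg (g1 - c1))]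
  nlinarith

/-- A function which takes different values at two measurably-inseparable points,
one of which has positive outer measure, is not a.e. strongly measurable. -/
lemma not_aesm {S : Type*} [MeasurableSpace S] (Q : Measure S) {x y : S}
    (hxy : ∀ u : Set S, MeasurableSet u → (x ∈ u ↔ y ∈ u)) (hx : Q {x} ≠ 0)
    {f : S → ℝ} (hne : f x ≠ f y) : ¬ AEStronglyMeasurable f Q := by
  rintro ⟨g, hgsm, hfg⟩
  have hgm : Measurable g := hgsm.measurable
  have hgxy : g x = g y := by
    have hu : MeasurableSet (g ⁻¹' {g x}) := hgm (measurableSet_singleton _)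
    have := (hxy _ hu).mp (by simp : x ∈ g ⁻¹' {g x})
    simpa using this.symm
  have hy : Q {y} ≠ 0 := by
    intro h0
    obtain ⟨v, hv1, hv2, hv3⟩ := exists_measurable_superset_of_null h0
    exact hx (measure_mono_null (by
      intro z hz
      rcases hz with rfl
      exact (hxy v hv2).mpr (hv1 rfl)) hv3)
  have hbad : Q {z | f z ≠ g z} = 0 := by
    have := hfg
    rw [Filter.EventuallyEq, ae_iff] at this
    simpa using this
  rcases ne_or_eq (f x) (g x) with h | h
  · exact hx (measure_mono_null (by intro z hz; rcases hz with rfl; exact h) hbad)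
  · have : f y ≠ g y := by rw [← hgxy, ← h]; exact fun hh => hne hh.symm
    exact hy (measure_mono_null (by intro z hz; rcases hz with rfl; exact this) hbad)

/-- If a finitely discrete measure has no multi-point atoms of positive measure,
then every real function is integrable. -/
lemma all_integrable {S : Type*} [MeasurableSpace S] (Q : Measure S) [IsFiniteMeasure Q]
    (hfd : FinitelyDiscrete Q)
    (hB : ∀ x y : S, x ≠ y → (∀ u : Set S, MeasurableSet u → (x ∈ u ↔ y ∈ u)) → Q {x} = 0)
    (f : S → ℝ) : Integrable f Q := by
  classical
  obtain ⟨s, hs⟩ := hfd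
  obtain ⟨u, hsu, hum, hu0⟩ := exists_measurable_superset_of_null hs
  have htsub : uᶜ ⊆ (↑s : Set S) := by
    intro z hz
    by_contra hzs
    exact hz (hsu hzs)
  have htfin : (uᶜ : Set S).Finite := s.finite_toSet.subset htsub
  have hsing : ∀ x ∈ uᶜ, Q {x} ≠ 0 → MeasurableSet ({x} : Set S) := by
    intro x hxt hx
    have hsep : ∀ y : S, ∃ w : Set S, MeasurableSet w ∧ x ∈ w ∧ (y ≠ x → y ∉ w) := by
      intro y
      by_cases hyx : y = x
      · exact ⟨Set.univ, MeasurableSet.univ, trivial, fun h => absurd hyx h⟩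
      · have : ¬ (∀ u : Set S, MeasurableSet u → (x ∈ u ↔ y ∈ u)) := by
          intro hequiv
          exact hx (hB x y (fun h => hyx h.symm) hequiv)
        push_neg at this
        obtain ⟨w, hwm, hw⟩ := this
        rcases hw with ⟨hxw, hyw⟩ | ⟨hxw, hyw⟩
        · exact ⟨w, hwm, hxw, fun _ => hyw⟩
        · exact ⟨wᶜ, hwm.compl, hxw, fun _ hc => hc hyw⟩
    choose w hwm hwx hwy using hsep
    have hxeq : ({x} : Set S) = uᶜ ∩ ⋂ y ∈ uᶜ, w y := by
      ext z
      simp only [Set.mem_singleton_iff, Set.mem_inter_iff, Set.mem_iInter]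
      constructor
      · rintro rfl
        exact ⟨hxt, fun y _ => hwx y⟩
      · rintro ⟨hzt, hz⟩
        by_contra hzx
        exact hwy z hzx (hz z hzt)
    rw [hxeq]
    exact hum.compl.inter (MeasurableSet.biInter htfin.countable (fun y _ => hwm y))
  set F : Finset S := htfin.toFinset.filter (fun x => Q {x} ≠ 0) with hF
  have hFt : ∀ x ∈ F, x ∈ uᶜ ∧ Q {x} ≠ 0 := by
    intro x hx
    rw [hF, Finset.mem_filter, Set.Finite.mem_toFinset] at hx
    exact hx
  set g : S → ℝ := fun z => ∑ x ∈ F, if z = x then f x else 0 with hg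
  have hgm : Measurable g := by
    apply Finset.measurable_sum
    intro x hx
    have hxs : MeasurableSet {z : S | z = x} := by
      have : {z : S | z = x} = ({x} : Set S) := by ext z; simp
      rw [this]; exact hsing x (hFt x hx).1 (hFt x hx).2
    exact Measurable.ite hxs measurable_const measurable_const
  have hgbd : ∀ z, ‖g z‖ ≤ ∑ x ∈ F, |f x| := by
    intro z
    rw [hg]
    simp only [Real.norm_eq_abs]
    refine le_trans (Finset.abs_sum_le_sum_abs _ _) (Finset.sum_le_sum fun x _ => ?_)
    by_cases h : z = x <;> simp [h]
  have hgint : Integrable g Q := by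
    refine (integrable_const (∑ x ∈ F, |f x|)).mono' hgm.aestronglyMeasurable ?_
    exact Filter.Eventually.of_forall hgbd
  have hae : f =ᵐ[Q] g := by
    have hsub : {z | f z ≠ g z}
        ⊆ u ∪ ⋃ x ∈ htfin.toFinset.filter (fun x => Q {x} = 0), {x} := by
      intro z hz
      by_cases hzu : z ∈ u
      · exact Or.inl hzu
      · right
        have hzt : z ∈ uᶜ := hzu
        have hzF : z ∉ F := by
          intro hzF
          apply hz
          rw [hg]
          simp only []
          rw [Finset.sum_ite_eq F z (fun x => f x)]
          simp [hzF]
        have hz0 : Q {z} = 0 := by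
          by_contra h0
          exact hzF (by rw [hF, Finset.mem_filter, Set.Finite.mem_toFinset]; exact ⟨hzt, h0⟩)
        simp only [Set.mem_iUnion]
        exact ⟨z, by rw [Finset.mem_filter, Set.Finite.mem_toFinset]; exact ⟨hzt, hz0⟩, rfl⟩
    have h0 : Q (u ∪ ⋃ x ∈ htfin.toFinset.filter (fun x => Q {x} = 0), {x}) = 0 := by
      refine measure_union_null hu0 ?_
      refine (measure_biUnion_null_iff
        (htfin.toFinset.filter (fun x => Q {x} = 0)).countable_toSet).mpr ?_
      intro x hx
      rw [Finset.mem_coe, Finset.mem_filter] at hx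
      exact hx.2
    rw [Filter.EventuallyEq, ae_iff]
    exact measure_mono_null hsub h0
  exact hgint.congr hae.symm

/-- Covering-number arithmetic. -/
lemma count_eq (a1 v1 a2 v2 a τ : ℝ) (ha1 : 0 < a1) (ha2 : 0 < a2)
    (hw : 0 < v1 + v2) (hτ : 0 < τ)
    (ha : a = (a1 ^ v1 * a2 ^ v2) ^ (1 / (v1 + v2))) :
    (a1 / (τ / 2)) ^ v1 * (a2 / (τ / 2)) ^ v2 = (2 * a / τ) ^ (v1 + v2) := by
  have hX : (0:ℝ) ≤ a1 ^ v1 * a2 ^ v2 := by positivity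
  have haw : a ^ (v1 + v2) = a1 ^ v1 * a2 ^ v2 := by
    rw [ha, ← Real.rpow_mul hX, one_div_mul_cancel (ne_of_gt hw), Real.rpow_one]
  have h2τ : (0:ℝ) < 2 / τ := by positivity
  have ha0 : (0:ℝ) ≤ a := by rw [ha]; positivity
  have e1 : a1 / (τ / 2) = 2 / τ * a1 := by field_simp
  have e2 : a2 / (τ / 2) = 2 / τ * a2 := by field_simp
  have e3 : 2 * a / τ = 2 / τ * a := by ring
  rw [e1, e2, e3, Real.mul_rpow (le_of_lt h2τ) (le_of_lt ha1),
    Real.mul_rpow (le_of_lt h2τ) (le_of_lt ha2),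
    Real.mul_rpow (le_of_lt h2τ) ha0, Real.rpow_add h2τ, haw]
  ring

/-- The geometric mean is at least `e`. -/
lemma exp_le_a (a1 v1 a2 v2 a : ℝ) (ha1 : Real.exp 1 ≤ a1) (ha2 : Real.exp 1 ≤ a2)
    (hv1 : 1 ≤ v1) (hv2 : 1 ≤ v2)
    (ha : a = (a1 ^ v1 * a2 ^ v2) ^ (1 / (v1 + v2))) : Real.exp 1 ≤ a := by
  have he : (0:ℝ) < Real.exp 1 := Real.exp_pos 1
  have hw : (0:ℝ) < v1 + v2 := by linarith
  have h1 : Real.exp 1 ^ v1 ≤ a1 ^ v1 := Real.rpow_le_rpow (le_of_lt he) ha1 (by linarith)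
  have h2 : Real.exp 1 ^ v2 ≤ a2 ^ v2 := Real.rpow_le_rpow (le_of_lt he) ha2 (by linarith)
  have hXle : Real.exp 1 ^ (v1 + v2) ≤ a1 ^ v1 * a2 ^ v2 := by
    rw [Real.rpow_add he]
    have ha1pos : (0:ℝ) < a1 := lt_of_lt_of_le he ha1
    exact mul_le_mul h1 h2 (le_of_lt (Real.rpow_pos_of_pos he v2))
      (le_of_lt (Real.rpow_pos_of_pos ha1pos v1))
  have key : (Real.exp 1 ^ (v1 + v2)) ^ (1 / (v1 + v2)) ≤ a := by
    rw [ha]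
    exact Real.rpow_le_rpow (Real.rpow_pos_of_pos he _).le hXle (le_of_lt (one_div_pos.mpr hw))
  rwa [← Real.rpow_mul (le_of_lt he), mul_one_div_cancel (ne_of_gt hw),
    Real.rpow_one] at key

/-- The product class of two VC type classes is VC type:
`G₁·G₂` is VC(b₁b₂, 2a, v₁+v₂) with `a = (a₁^{v₁} a₂^{v₂})^{1/(v₁+v₂)}`. -/
theorem vcType_product {S : Type*} [MeasurableSpace S]
    (G1 G2 : Set (S → ℝ)) (b1 a1 v1 b2 a2 v2 a : ℝ)
    (h1 : VCType G1 b1 a1 v1) (h2 : VCType G2 b2 a2 v2)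
    (ha : a = (a1 ^ v1 * a2 ^ v2) ^ (1 / (v1 + v2))) :
    VCType {h : S → ℝ | ∃ g1 ∈ G1, ∃ g2 ∈ G2, h = fun x => g1 x * g2 x}
      (b1 * b2) (2 * a) (v1 + v2) := by
  classical
  obtain ⟨⟨hb1, ha1e, hv1⟩, hbd1, hcov1⟩ := h1
  obtain ⟨⟨hb2, ha2e, hv2⟩, hbd2, hcov2⟩ := h2
  have hw : (0:ℝ) < v1 + v2 := by linarith
  have he : (0:ℝ) < Real.exp 1 := Real.exp_pos 1
  have he1 : (1:ℝ) ≤ Real.exp 1 := by nlinarith [Real.add_one_le_exp (1:ℝ)]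
  have ha1pos : 0 < a1 := lt_of_lt_of_le he ha1e
  have ha2pos : 0 < a2 := lt_of_lt_of_le he ha2e
  have hae : Real.exp 1 ≤ a := exp_le_a a1 v1 a2 v2 a ha1e ha2e hv1 hv2 ha
  have hapos : 0 < a := lt_of_lt_of_le he hae
  refine ⟨⟨by positivity, by linarith, by linarith⟩, ?_, ?_⟩
  · rintro g ⟨g1, hg1, g2, hg2, rfl⟩ x
    calc |g1 x * g2 x| = |g1 x| * |g2 x| := abs_mul _ _
    _ ≤ b1 * b2 :=
      mul_le_mul (hbd1 _ hg1 x) (hbd2 _ hg2 x) (abs_nonneg _) (le_of_lt hb1)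
  · intro Q hQ hfd τ hτ0 hτ1
    by_cases hcase : ∃ x y : S, x ≠ y ∧
        (∀ u : Set S, MeasurableSet u → (x ∈ u ↔ y ∈ u)) ∧ Q {x} ≠ 0
    · -- a fat multi-point atom exists: a single center works (nothing is measurable)
      obtain ⟨x, y, hne, hequiv, hx⟩ := hcase
      refine ⟨1, ?_, ?_⟩
      · have hbase : 1 ≤ 2 * a / τ := by
          rw [le_div_iff₀ hτ0]; nlinarith
        have hone : (1:ℝ) ≤ (2 * a / τ) ^ (v1 + v2) := by
          calc (1:ℝ) = 1 ^ (v1 + v2) := (Real.one_rpow _).symm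
          _ ≤ (2 * a / τ) ^ (v1 + v2) :=
            Real.rpow_le_rpow (by norm_num) hbase (le_of_lt hw)
        simpa using hone
      · refine ⟨fun _ => fun z => if z = y then 2 * (b1 * b2) + 1 else 0, ?_⟩
        rintro g ⟨g1, hg1, g2, hg2, rfl⟩
        refine ⟨0, ?_⟩
        have hint : ¬ Integrable
            (fun z => ((fun x => g1 x * g2 x) z - (if z = y then 2 * (b1 * b2) + 1 else 0)) ^ 2) Q := by
          intro hI
          refine not_aesm Q hequiv hx ?_ hI.aestronglyMeasurable
          simp only [if_neg hne, eq_self_iff_true, if_true]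
          have hBx : |g1 x * g2 x| ≤ b1 * b2 := by
            rw [abs_mul]
            exact mul_le_mul (hbd1 _ hg1 x) (hbd2 _ hg2 x) (abs_nonneg _) (le_of_lt hb1)
          have hBy : |g1 y * g2 y| ≤ b1 * b2 := by
            rw [abs_mul]
            exact mul_le_mul (hbd1 _ hg1 y) (hbd2 _ hg2 y) (abs_nonneg _) (le_of_lt hb1)
          have hBx' := abs_le.mp hBx
          have hBy' := abs_le.mp hBy
          intro heq
          nlinarith [hBx'.1, hBx'.2, hBy'.1, hBy'.2, mul_pos hb1 hb2]
        rw [integral_undef hint]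
        positivity
    · -- no fat multi-point atoms: all functions are integrable and covering is genuine
      push_neg at hcase
      have hallint : ∀ f : S → ℝ, Integrable f Q := all_integrable Q hfd hcase
      have hτ2 : 0 < τ / 2 := by linarith
      have hτ2' : τ / 2 < 1 := by linarith
      obtain ⟨n1, hn1, c1, hc1⟩ := hcov1 Q hQ hfd (τ / 2) hτ2 hτ2'
      obtain ⟨n2, hn2, c2, hc2⟩ := hcov2 Q hQ hfd (τ / 2) hτ2 hτ2'
      refine ⟨n1 * n2, ?_, ?_⟩
      · have hp1 : (0:ℝ) ≤ (a1 / (τ / 2)) ^ v1 := by positivity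
        calc ((n1 * n2 : ℕ) : ℝ) = (n1 : ℝ) * (n2 : ℝ) := by push_cast; ring
        _ ≤ (a1 / (τ / 2)) ^ v1 * (a2 / (τ / 2)) ^ v2 :=
          mul_le_mul hn1 hn2 (Nat.cast_nonneg _) hp1
        _ = (2 * a / τ) ^ (v1 + v2) := count_eq a1 v1 a2 v2 a τ ha1pos ha2pos hw hτ0 ha
      · refine ⟨fun p => fun z =>
          c1 (finProdFinEquiv.symm p).1 z *
            (max (-b2) (min b2 (c2 (finProdFinEquiv.symm p).2 z))), ?_⟩
        rintro g ⟨g1, hg1, g2, hg2, rfl⟩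
        obtain ⟨i, hi⟩ := hc1 g1 hg1
        obtain ⟨j, hj⟩ := hc2 g2 hg2
        refine ⟨finProdFinEquiv (i, j), ?_⟩
        simp only [Equiv.symm_apply_apply]
        have hmono : ∫ z, ((fun x => g1 x * g2 x) z -
              c1 i z * (max (-b2) (min b2 (c2 j z)))) ^ 2 ∂Q
            ≤ ∫ z, (2 * b2 ^ 2 * (g1 z - c1 i z) ^ 2 + 2 * b1 ^ 2 * (g2 z - c2 j z) ^ 2) ∂Q := by
          refine integral_mono (hallint _) (hallint _) (fun z => ?_)
          exact prod_pointwise b1 b2 (g1 z) (g2 z) (c1 i z) (c2 j z) (le_of_lt hb2)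
            (hbd1 _ hg1 z) (hbd2 _ hg2 z)
        have hsplit : ∫ z, (2 * b2 ^ 2 * (g1 z - c1 i z) ^ 2
              + 2 * b1 ^ 2 * (g2 z - c2 j z) ^ 2) ∂Q
            = 2 * b2 ^ 2 * ∫ z, (g1 z - c1 i z) ^ 2 ∂Q
              + 2 * b1 ^ 2 * ∫ z, (g2 z - c2 j z) ^ 2 ∂Q := by
          rw [integral_add (hallint _) (hallint _), integral_const_mul, integral_const_mul]
        have hI1 : ∫ z, (g1 z - c1 i z) ^ 2 ∂Q ≤ (b1 * (τ / 2)) ^ 2 := hi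
        have hI2 : ∫ z, (g2 z - c2 j z) ^ 2 ∂Q ≤ (b2 * (τ / 2)) ^ 2 := hj
        have hI1' : 2 * b2 ^ 2 * ∫ z, (g1 z - c1 i z) ^ 2 ∂Q
            ≤ 2 * b2 ^ 2 * (b1 * (τ / 2)) ^ 2 :=
          mul_le_mul_of_nonneg_left hI1 (by positivity)
        have hI2' : 2 * b1 ^ 2 * ∫ z, (g2 z - c2 j z) ^ 2 ∂Q
            ≤ 2 * b1 ^ 2 * (b2 * (τ / 2)) ^ 2 :=
          mul_le_mul_of_nonneg_left hI2 (by positivity)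
        have hfinal : 2 * b2 ^ 2 * (b1 * (τ / 2)) ^ 2 + 2 * b1 ^ 2 * (b2 * (τ / 2)) ^ 2
            = (b1 * b2 * τ) ^ 2 := by ring
        linarith [hmono, le_of_eq hsplit]
end

section
/- Let W_n, W_n^0 be random variables on a common probability space and let c: (0,1) -> R be the quantile function of W_n^0 (i.e., c(alpha) is the (1-alpha)-quantile of W_n^0). Let hat_c be a nonnegative random variable, and suppose: (a) P(|W_n - W_n^0| > eps1) <= delta1; (b) P(hat_c < c(alpha + tau) - eps2) <= delta2. Then P(W_n <= hat_c + eps1 + eps2) >= 1 - alpha - tau - delta1 - delta2 - p, where p = P(c(alpha+tau) - eps1 - eps2 <= W_n^0 <= c(alpha+tau)) is an anti-concentration term, for any alpha in (0,1), tau >= 0 with alpha + tau < 1, and eps1, eps2 >= 0. -/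
open MeasureTheory

/-- Union bound in `toReal` form for finite measures. -/
lemma toReal_union_bound {Ω : Type*} [MeasurableSpace Ω] (P : Measure Ω)
    [IsFiniteMeasure P] {A X Y : Set Ω} (h : A ⊆ X ∪ Y) :
    (P A).toReal ≤ (P X).toReal + (P Y).toReal := by
  have h1 : P A ≤ P X + P Y := (measure_mono h).trans (measure_union_le X Y)
  rw [← ENNReal.toReal_add (measure_ne_top P X) (measure_ne_top P Y)]
  exact ENNReal.toReal_mono (by finiteness) h1

/-- The CDF of `W0` attains level `t ∈ (0,1)` at the `t`-quantile `sInf {x | t ≤ P(W0 ≤ x)}`. -/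
lemma cdf_sInf_ge {Ω : Type*} [MeasurableSpace Ω] (P : Measure Ω) [IsProbabilityMeasure P]
    (W0 : Ω → ℝ) (hW0 : Measurable W0) {t : ℝ} (ht0 : 0 < t) (ht1 : t < 1) :
    ENNReal.ofReal t ≤ P {ω | W0 ω ≤ sInf {x : ℝ | ENNReal.ofReal t ≤ P {ω | W0 ω ≤ x}}} := by
  set S : Set ℝ := {x : ℝ | ENNReal.ofReal t ≤ P {ω | W0 ω ≤ x}} with hS
  -- S is nonempty
  have hmono : ∀ {x y : ℝ}, x ≤ y → P {ω | W0 ω ≤ x} ≤ P {ω | W0 ω ≤ y} := by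
    intro x y hxy
    exact measure_mono (fun ω hω => le_trans hω hxy)
  have hne : S.Nonempty := by
    have hmonoU : Monotone (fun n : ℕ => {ω | W0 ω ≤ (n : ℝ)}) := by
      intro n m hnm ω hω
      simp only [Set.mem_setOf_eq] at hω ⊢
      exact le_trans hω (by exact_mod_cast hnm)
    have hU : (⋃ n : ℕ, {ω | W0 ω ≤ (n : ℝ)}) = Set.univ := by
      ext ω
      simp only [Set.mem_iUnion, Set.mem_univ, iff_true]
      obtain ⟨n, hn⟩ := exists_nat_ge (W0 ω)
      exact ⟨n, hn⟩
    have htend := tendsto_measure_iUnion_atTop (μ := P) hmonoU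
    rw [hU, measure_univ] at htend
    have hlt : ENNReal.ofReal t < 1 := by
      rw [← ENNReal.ofReal_one]
      exact ENNReal.ofReal_lt_ofReal_iff one_pos |>.2 ht1
    have := htend.eventually (eventually_gt_nhds hlt)
    obtain ⟨n, hn⟩ := this.exists
    exact ⟨(n : ℝ), le_of_lt hn⟩
  -- S is bounded below
  have hbdd : BddBelow S := by
    have hanti : Antitone (fun n : ℕ => {ω | W0 ω ≤ -(n : ℝ)}) := by
      intro n m hnm ω hω
      simp only [Set.mem_setOf_eq] at hω ⊢
      refine le_trans hω (neg_le_neg ?_)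
      exact_mod_cast hnm
    have hI : (⋂ n : ℕ, {ω | W0 ω ≤ -(n : ℝ)}) = (∅ : Set Ω) := by
      ext ω
      simp only [Set.mem_iInter, Set.mem_empty_iff_false, iff_false, not_forall]
      obtain ⟨n, hn⟩ := exists_nat_gt (-W0 ω)
      exact ⟨n, by simp only [Set.mem_setOf_eq]; push_neg; linarith⟩
    have htend := tendsto_measure_iInter_atTop (μ := P)
      (s := fun n : ℕ => {ω | W0 ω ≤ -(n : ℝ)})
      (fun n => ((measurableSet_le hW0 measurable_const).nullMeasurableSet))
      hanti ⟨0, measure_ne_top P _⟩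
    rw [hI, measure_empty] at htend
    have hpos : (0 : ENNReal) < ENNReal.ofReal t := ENNReal.ofReal_pos.2 ht0
    have := htend.eventually (eventually_lt_nhds hpos)
    obtain ⟨n, hn⟩ := this.exists
    refine ⟨-(n : ℝ), fun x hx => ?_⟩
    by_contra hxn
    push_neg at hxn
    exact absurd (le_trans hx (hmono hxn.le)) (not_le.2 hn)
  set q : ℝ := sInf S with hq
  -- {W0 ≤ q} = ⋂ n, {W0 ≤ q + 1/(n+1)}
  have hseteq : {ω | W0 ω ≤ q} = ⋂ n : ℕ, {ω | W0 ω ≤ q + 1 / (n + 1)} := by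
    ext ω
    simp only [Set.mem_setOf_eq, Set.mem_iInter]
    constructor
    · intro h n
      have : (0:ℝ) < 1 / (n + 1) := by positivity
      linarith
    · intro h
      by_contra hlt
      push_neg at hlt
      obtain ⟨n, hn⟩ := exists_nat_one_div_lt (show (0:ℝ) < W0 ω - q by linarith)
      have := h n
      linarith
  have hanti : Antitone (fun n : ℕ => {ω | W0 ω ≤ q + 1 / (n + 1)}) := by
    intro n m hnm ω hω
    have h1 : (1 : ℝ) / (m + 1) ≤ 1 / (n + 1) := by
      apply one_div_le_one_div_of_le (by positivity)
      have := (Nat.cast_le (α := ℝ)).2 hnm; linarith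
    simp only [Set.mem_setOf_eq] at hω ⊢
    linarith
  have htend := tendsto_measure_iInter_atTop (μ := P)
    (s := fun n : ℕ => {ω | W0 ω ≤ q + 1 / (n + 1)})
    (fun n => ((measurableSet_le hW0 measurable_const).nullMeasurableSet))
    hanti ⟨0, measure_ne_top P _⟩
  rw [← hseteq] at htend
  refine ge_of_tendsto' htend fun n => ?_
  have hlt : sInf S < q + 1 / (n + 1) := by
    rw [← hq]
    have : (0:ℝ) < 1 / (n + 1) := by positivity
    linarith
  obtain ⟨x, hxS, hxlt⟩ := (csInf_lt_iff hbdd hne).1 hlt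
  exact le_trans hxS (hmono hxlt.le)

/-- Generic coverage bound: a Gaussian coupling bound, a quantile comparison bound
for the estimated critical value, and an anti-concentration term for the Gaussian
proxy near its quantile yield a lower bound on the coverage probability. -/
theorem coverage_from_coupling_and_quantile
    {Ω : Type*} [MeasurableSpace Ω] (P : Measure Ω) [IsProbabilityMeasure P]
    (W W0 chat : Ω → ℝ)
    (hW : Measurable W) (hW0 : Measurable W0) (hchatm : Measurable chat)
    (hchat : ∀ ω, 0 ≤ chat ω)
    -- c is the quantile function of W0: c(α) is the (1-α)-quantile of W0
    (c : ℝ → ℝ)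
    (hc : ∀ α ∈ Set.Ioo (0 : ℝ) 1,
      c α = sInf {x : ℝ | ENNReal.ofReal (1 - α) ≤ P {ω | W0 ω ≤ x}})
    (α τ ε1 ε2 δ1 δ2 : ℝ)
    (hα : α ∈ Set.Ioo (0 : ℝ) 1) (hτ : 0 ≤ τ) (hατ : α + τ < 1)
    (hε1 : 0 ≤ ε1) (hε2 : 0 ≤ ε2)
    -- (a) coupling bound
    (ha : (P {ω | ε1 < |W ω - W0 ω|}).toReal ≤ δ1)
    -- (b) quantile comparison bound for the estimated critical value
    (hb : (P {ω | chat ω < c (α + τ) - ε2}).toReal ≤ δ2) :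
    1 - α - τ - δ1 - δ2 -
        (P {ω | c (α + τ) - ε1 - ε2 ≤ W0 ω ∧ W0 ω ≤ c (α + τ)}).toReal ≤
      (P {ω | W ω ≤ chat ω + ε1 + ε2}).toReal := by
  obtain ⟨hα0, hα1⟩ := hα
  set t : ℝ := 1 - (α + τ) with ht_def
  have ht0 : 0 < t := by simp only [ht_def]; linarith
  have ht1 : t < 1 := by simp only [ht_def]; linarith
  set q : ℝ := c (α + τ) with hq_def
  have hqeq : q = sInf {x : ℝ | ENNReal.ofReal t ≤ P {ω | W0 ω ≤ x}} := by
    rw [hq_def, hc (α + τ) ⟨by linarith, hατ⟩]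
  -- Key quantile property: P(W0 ≤ q) ≥ t
  have hkey : ENNReal.ofReal t ≤ P {ω | W0 ω ≤ q} := by
    rw [hqeq]; exact cdf_sInf_ge P W0 hW0 ht0 ht1
  have hkeyR : t ≤ (P {ω | W0 ω ≤ q}).toReal :=
    (ENNReal.ofReal_le_iff_le_toReal (measure_ne_top P _)).1 hkey
  -- Event decomposition
  have h1 : (P {ω | W0 ω ≤ q}).toReal ≤
      (P {ω | W0 ω ≤ q - ε1 - ε2}).toReal +
      (P {ω | q - ε1 - ε2 ≤ W0 ω ∧ W0 ω ≤ q}).toReal := by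
    apply toReal_union_bound
    intro ω hω
    simp only [Set.mem_setOf_eq] at hω
    by_cases h : W0 ω ≤ q - ε1 - ε2
    · exact Or.inl h
    · exact Or.inr ⟨le_of_not_ge h, hω⟩
  have h2 : (P {ω | W0 ω ≤ q - ε1 - ε2}).toReal ≤
      (P ({ω | W ω ≤ chat ω + ε1 + ε2} ∪ {ω | ε1 < |W ω - W0 ω|})).toReal +
      (P {ω | chat ω < q - ε2}).toReal := by
    apply toReal_union_bound
    intro ω hω
    simp only [Set.mem_setOf_eq, Set.mem_union] at hω ⊢
    by_cases hB : ε1 < |W ω - W0 ω|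
    · exact Or.inl (Or.inr hB)
    · by_cases hC : chat ω < q - ε2
      · exact Or.inr hC
      · push_neg at hB hC
        left; left
        have habs := abs_le.1 hB
        linarith [habs.1]
  have h3 : (P ({ω | W ω ≤ chat ω + ε1 + ε2} ∪ {ω | ε1 < |W ω - W0 ω|})).toReal ≤
      (P {ω | W ω ≤ chat ω + ε1 + ε2}).toReal + (P {ω | ε1 < |W ω - W0 ω|}).toReal :=
    toReal_union_bound P (subset_refl _)
  have : 1 - α - τ = t := by rw [ht_def]; ring
  linarith
end
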